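/- Let A ⊆ ℕ^m be a finite downward closed set, and let P_A = {(p_{α_1,1},…,p_{α_m,m}) : α ∈ A} be a non-tensorial grid built from pairwise distinct nodes p_{0,i},…,p_{n_i,i} ∈ ℝ in each coordinate i, where n_i = max_{α∈A} α_i. Then P_A is unisolvent with respect to Π_A = span{x^α : α ∈ A}: the only polynomial in Π_A vanishing at every point of P_A is the zero polynomial. -/

import Mathlib

open MvPolynomial Finset

/-- Newton-type basis polynomial for multi-index `α`. -/
noncomputable def NB {m : ℕ} (p : Fin m → ℕ → ℝ) (α : Fin m →₀ ℕ) :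
    MvPolynomial (Fin m) ℝ :=
  ∏ i, ∏ j ∈ Finset.range (α i), (X i - C (p i j))

lemma eval_NB {m : ℕ} (p : Fin m → ℕ → ℝ) (α : Fin m →₀ ℕ) (x : Fin m → ℝ) :
    eval x (NB p α) = ∏ i, ∏ j ∈ Finset.range (α i), (x i - p i j) := by
  simp [NB]

lemma eval_NB_eq_zero {m : ℕ} (p : Fin m → ℕ → ℝ) (α β : Fin m →₀ ℕ) (i : Fin m)
    (h : β i < α i) : eval (fun i => p i (β i)) (NB p α) = 0 := by
  rw [eval_NB]
  apply Finset.prod_eq_zero (Finset.mem_univ i)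
  apply Finset.prod_eq_zero (Finset.mem_range.2 h)
  simp

lemma NB_coeff_support {m : ℕ} (p : Fin m → ℕ → ℝ) :
    ∀ n (α : Fin m →₀ ℕ), (∑ i, α i) = n →
      coeff α (NB p α) = 1 ∧ ∀ β ∈ (NB p α).support, ∀ i, β i ≤ α i := by
  intro n
  induction n with
  | zero =>
    intro α hα
    have h0 : ∀ i, α i = 0 := by
      intro i
      exact Nat.eq_zero_of_le_zero (hα ▸ Finset.single_le_sum
        (fun j _ => Nat.zero_le (α j)) (Finset.mem_univ i))
    have hα0 : α = 0 := Finsupp.ext h0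
    subst hα0
    constructor
    · simp [NB]
    · intro β hβ i
      rw [show NB p 0 = 1 by simp [NB]] at hβ
      rw [mem_support_iff, MvPolynomial.coeff_one] at hβ
      by_cases h : (0 : Fin m →₀ ℕ) = β
      · simp [← h]
      · simp [h] at hβ
  | succ n ih =>
    intro α hα
    have hne : ∃ i, α i ≠ 0 := by
      by_contra h
      push_neg at h
      simp [h] at hα
    obtain ⟨i, hi⟩ := hne
    set α' : Fin m →₀ ℕ := α - Finsupp.single i 1 with hα'def
    have hag : ∀ j, j ≠ i → α' j = α j := by
      intro j hj
      simp [hα'def, Finsupp.single_apply, Ne.symm hj]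
    have hfi : α i = α' i + 1 := by
      simp [hα'def, Finsupp.single_apply]
      omega
    have hαeq : α = α' + Finsupp.single i 1 := by
      ext j
      by_cases hj : j = i
      · subst hj
        simp [hfi, Finsupp.single_apply]
      · simp [hag j hj, Finsupp.single_apply, Ne.symm hj]
    have hsum : ∑ j, α' j = n := by
      have h1 : ∑ j, α j = (∑ j, α' j) + 1 := by
        rw [hαeq]
        simp only [Finsupp.add_apply]
        rw [Finset.sum_add_distrib]
        congr 1
        rw [Finset.sum_eq_single i]
        · simp
        · intro b _ hb
          simp [Finsupp.single_apply, Ne.symm hb]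
        · intro h
          exact absurd (Finset.mem_univ i) h
      omega
    obtain ⟨ihc, ihs⟩ := ih α' hsum
    have hstep : NB p α = NB p α' * (X i - C (p i (α' i))) := by
      unfold NB
      rw [← Finset.mul_prod_erase Finset.univ _ (Finset.mem_univ i),
        ← Finset.mul_prod_erase Finset.univ
          (fun i' => ∏ j ∈ Finset.range (α' i'), (X i' - C (p i' j))) (Finset.mem_univ i)]
      have h2 : ∏ i' ∈ Finset.univ.erase i, ∏ j ∈ Finset.range (α i'), (X i' - C (p i' j))
          = ∏ i' ∈ Finset.univ.erase i, ∏ j ∈ Finset.range (α' i'), (X i' - C (p i' j)) := by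
        apply Finset.prod_congr rfl
        intro j hj
        rw [hag j (Finset.ne_of_mem_erase hj)]
      rw [h2, hfi, Finset.prod_range_succ]
      ring
    constructor
    · rw [hstep, mul_sub, coeff_sub]
      have h1 : coeff α (NB p α' * X i) = 1 := by
        rw [hαeq, coeff_mul_X]
        exact ihc
      have h2 : coeff α (NB p α' * C (p i (α' i))) = 0 := by
        rw [mul_comm, coeff_C_mul]
        have : α ∉ (NB p α').support := by
          intro hmem
          have := ihs α hmem i
          omega
        rw [notMem_support_iff.1 this, mul_zero]
      rw [h1, h2, sub_zero]
    · intro β hβ j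
      rw [hstep, mul_sub] at hβ
      have hβ' := mem_support_iff.1 hβ
      rw [coeff_sub] at hβ'
      have : coeff β (NB p α' * X i) ≠ 0 ∨ coeff β (NB p α' * C (p i (α' i))) ≠ 0 := by
        by_contra h
        push_neg at h
        rw [h.1, h.2, sub_zero] at hβ'
        exact hβ' rfl
      rcases this with h | h
      · rw [coeff_mul_X'] at h
        split_ifs at h with hmem
        · have hle := ihs (β - Finsupp.single i 1) (mem_support_iff.2 h)
          have hβi : 1 ≤ β i := by
            have := Finsupp.mem_support_iff.1 hmem
            omega
          by_cases hj : j = i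
          · subst hj
            have := hle j
            simp [Finsupp.single_apply] at this
            omega
          · have := hle j
            simp [Finsupp.single_apply, Ne.symm hj] at this
            rw [← hag j hj]
            exact this
        · exact absurd rfl h
      · rw [mul_comm, coeff_C_mul] at h
        have h' : coeff β (NB p α') ≠ 0 := by
          intro h0
          rw [h0, mul_zero] at h
          exact h rfl
        have hle := ihs β (mem_support_iff.2 h') j
        have : α' j ≤ α j := by
          by_cases hj : j = i
          · subst hj; omega
          · rw [hag j hj]
        omega

lemma monomial_mem_span {m : ℕ} (A : Finset (Fin m →₀ ℕ))
    (hdc : ∀ α ∈ A, ∀ β : Fin m →₀ ℕ, (∀ i, β i ≤ α i) → β ∈ A)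
    (p : Fin m → ℕ → ℝ) (α : Fin m →₀ ℕ) (hA : α ∈ A) :
    (monomial α (1 : ℝ)) ∈ Submodule.span ℝ (NB p '' ↑A) := by
  generalize hn : (∑ i, α i) = n
  induction n using Nat.strong_induction_on generalizing α with
  | _ n ih =>
    obtain ⟨hc, hs⟩ := NB_coeff_support p (∑ i, α i) α rfl
    have hmem : α ∈ (NB p α).support := mem_support_iff.2 (by rw [hc]; exact one_ne_zero)
    have has := (NB p α).as_sum
    rw [← Finset.add_sum_erase _ _ hmem, hc] at has
    have hrep : (monomial α (1 : ℝ)) = NB p α -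
        ∑ β ∈ (NB p α).support.erase α, monomial β (coeff β (NB p α)) :=
      eq_sub_of_add_eq has.symm
    rw [hrep]
    apply Submodule.sub_mem
    · exact Submodule.subset_span ⟨α, hA, rfl⟩
    · apply Submodule.sum_mem
      intro β hβ
      have hβs := Finset.mem_of_mem_erase hβ
      have hβne := Finset.ne_of_mem_erase hβ
      have hβle : ∀ i, β i ≤ α i := hs β hβs
      have hβA : β ∈ A := hdc α hA β hβle
      have hβlt : ∑ i, β i < ∑ i, α i := by
        apply Finset.sum_lt_sum (fun i _ => hβle i)
        obtain ⟨i, hi⟩ : ∃ i, β i ≠ α i := by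
          by_contra h
          push_neg at h
          exact hβne (Finsupp.ext h)
        exact ⟨i, Finset.mem_univ i, lt_of_le_of_ne (hβle i) hi⟩
      have hspan := ih (∑ i, β i) (hn ▸ hβlt) β hβA rfl
      have heq : monomial β (coeff β (NB p α)) =
          (coeff β (NB p α)) • monomial β (1 : ℝ) := by
        rw [smul_monomial]
        simp
      rw [heq]
      exact Submodule.smul_mem _ _ hspan

/-- Unisolvence of the non-tensorial grid (assumption A1): let `A` be a
finite downward closed set of multi-indices, and in each coordinate `i` let
`p i 0, …, p i (n i)` be pairwise distinct real nodes, where `n i = max_{α ∈ A} α i`.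
Then the grid `P_A = { (p 1 (α 1), …, p m (α m)) : α ∈ A }` is unisolvent with
respect to `Π_A = span{x^α : α ∈ A}`: the only polynomial in `Π_A` vanishing at all
grid points is the zero polynomial. -/
theorem grid_unisolvent (m : ℕ) (A : Finset (Fin m →₀ ℕ))
    (hdc : ∀ α ∈ A, ∀ β : Fin m →₀ ℕ, (∀ i, β i ≤ α i) → β ∈ A)
    (p : Fin m → ℕ → ℝ)
    (hdist : ∀ i : Fin m, ∀ j ≤ A.sup (fun α => α i), ∀ j' ≤ A.sup (fun α => α i),
      j ≠ j' → p i j ≠ p i j')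
    (Q : MvPolynomial (Fin m) ℝ)
    (hQ : Q ∈ Submodule.span ℝ ((fun α : Fin m →₀ ℕ => (monomial α (1 : ℝ))) '' A))
    (hvanish : ∀ α ∈ A, eval (fun i => p i (α i)) Q = 0) :
    Q = 0 := by
  have hspan : Q ∈ Submodule.span ℝ (NB p '' ↑A) := by
    refine Submodule.span_le.2 ?_ hQ
    rintro _ ⟨α, hα, rfl⟩
    exact monomial_mem_span A hdc p α hα
  rw [Finsupp.mem_span_image_iff_linearCombination] at hspan
  obtain ⟨l, hl, hQl⟩ := hspan
  by_contra hQ0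
  have hlne : l ≠ 0 := fun h => hQ0 (by rw [← hQl, h, map_zero])
  have hsupp : l.support.Nonempty := Finsupp.support_nonempty_iff.2 hlne
  obtain ⟨α, hαs, hmin⟩ : ∃ α ∈ l.support, ∀ β ∈ l.support, ¬ β < α := by
    obtain ⟨α, hα⟩ := Finset.exists_minimal hsupp
    exact ⟨α, hα.1, fun β hβ hlt => hlt.not_ge (hα.2 hβ hlt.le)⟩
  have hαA : α ∈ A := (Finsupp.mem_supported ℝ l).1 hl hαs
  have hev : eval (fun i => p i (α i)) Q =
      ∑ β ∈ l.support, l β * eval (fun i => p i (α i)) (NB p β) := by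
    rw [← hQl, Finsupp.linearCombination_apply, Finsupp.sum, map_sum]
    apply Finset.sum_congr rfl
    intro β _
    rw [smul_eq_C_mul, map_mul, eval_C]
  have hzero := hvanish α hαA
  rw [hev, Finset.sum_eq_single α] at hzero
  · have hne : eval (fun i => p i (α i)) (NB p α) ≠ 0 := by
      rw [eval_NB]
      apply Finset.prod_ne_zero_iff.2
      intro i _
      apply Finset.prod_ne_zero_iff.2
      intro j hj
      rw [sub_ne_zero]
      have hj' : j < α i := Finset.mem_range.1 hj
      exact hdist i (α i) (Finset.le_sup (f := fun β => β i) hαA) j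
        (le_trans (le_of_lt hj') (Finset.le_sup (f := fun β => β i) hαA)) (Nat.ne_of_gt hj')
    exact Finsupp.mem_support_iff.1 hαs ((mul_eq_zero.1 hzero).resolve_right hne)
  · intro β hβ hβne
    have hnle : ¬ (∀ i, β i ≤ α i) := by
      intro hle
      exact hmin β hβ (lt_of_le_of_ne (Finsupp.le_def.2 hle) hβne)
    push_neg at hnle
    obtain ⟨i, hi⟩ := hnle
    rw [eval_NB_eq_zero p β α i hi, mul_zero]
  · intro h
    exact absurd hαs h
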